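/- Fix reals V > 0 and E > 0, and for λ > 0 set C′(λ) = √(π√λ/(3√V·E)) · exp(3VE²/(4λ)). Then, as λ → 0⁺, (1/C′(λ)) ∫_ℝ x²·exp(−(λV/4)x⁴ + Vx·E^{3/2}/√λ) dx − ( √2·E/(λ^{5/4}V^{1/4}) − 5/(18√2·λ^{1/4}·E·V^{5/4}) + 25λ^{3/4}/(1296√2·E³·V^{9/4}) ) = O(λ^{7/4}). -/

import Mathlib

open MeasureTheory Real Filter

namespace SP15

lemma integral_odd {f : ℝ → ℝ} (h : ∀ x, f (-x) = - f x) : (∫ x : ℝ, f x) = 0 := by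
  have h1 : (∫ x : ℝ, f (-x)) = ∫ x : ℝ, f x := integral_neg_eq_self f _
  have h2 : (∫ x : ℝ, f (-x)) = - ∫ x : ℝ, f x := by
    simp_rw [h]; exact integral_neg f
  linarith [h1, h2]

lemma integrable_abs_pow_gauss {c : ℝ} (hc : 0 < c) (n : ℕ) :
    Integrable (fun u : ℝ => |u| ^ n * Real.exp (-c * u ^ 2)) := by
  have hcont : Continuous fun u : ℝ => |u| ^ n * Real.exp (-c * u ^ 2) := by fun_prop
  refine Integrable.mono' ((integrable_exp_neg_mul_sq hc).add
    (((integrable_exp_neg_mul_sq (half_pos hc)).const_mul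
      ((n.factorial : ℝ) * (2 / c) ^ n)))) hcont.aestronglyMeasurable ?_
  filter_upwards with u
  have habs : |u| ^ n ≤ 1 + (u ^ 2) ^ n := by
    rcases le_total (|u|) 1 with h | h
    · have h1 : |u| ^ n ≤ 1 := pow_le_one₀ (abs_nonneg u) h
      have h2 : (0:ℝ) ≤ (u ^ 2) ^ n := pow_nonneg (sq_nonneg u) n
      linarith
    · have h1 : |u| ^ n ≤ |u| ^ (2 * n) := pow_le_pow_right₀ h (by omega)
      have h2 : |u| ^ (2 * n) = (u ^ 2) ^ n := by
        rw [← sq_abs, ← pow_mul]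
      linarith [h1, h2.le, h2.ge]
  have hkey : (u ^ 2) ^ n * Real.exp (-c * u ^ 2)
      ≤ (n.factorial : ℝ) * (2 / c) ^ n * Real.exp (-(c/2) * u ^ 2) := by
    have h3 : (c/2 * u ^ 2) ^ n / n.factorial ≤ Real.exp (c/2 * u ^ 2) :=
      Real.pow_div_factorial_le_exp _ (by positivity) n
    have h4 : (u ^ 2) ^ n ≤ (n.factorial : ℝ) * (2 / c) ^ n * Real.exp (c/2 * u ^ 2) := by
      have e1 : (c/2 * u ^ 2) ^ n = (c/2) ^ n * (u^2) ^ n := by rw [mul_pow]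
      have hf : (0:ℝ) < (n.factorial : ℝ) := by positivity
      have h5 : (c/2) ^ n * (u^2) ^ n ≤ (n.factorial : ℝ) * Real.exp (c/2 * u ^ 2) := by
        rw [← e1]; rw [div_le_iff₀ hf] at h3; linarith
      have h6 : (0:ℝ) < (c/2) ^ n := by positivity
      calc (u ^ 2) ^ n = ((c/2) ^ n * (u^2)^n) * ((2/c) ^ n) := by
            rw [mul_comm ((c/2)^n), mul_assoc, ← mul_pow]
            field_simp
            simp
        _ ≤ ((n.factorial : ℝ) * Real.exp (c/2 * u ^ 2)) * ((2/c) ^ n) := by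
            apply mul_le_mul_of_nonneg_right h5 (by positivity)
        _ = (n.factorial : ℝ) * (2 / c) ^ n * Real.exp (c/2 * u ^ 2) := by ring
    calc (u ^ 2) ^ n * Real.exp (-c * u ^ 2)
        ≤ ((n.factorial : ℝ) * (2 / c) ^ n * Real.exp (c/2 * u ^ 2)) * Real.exp (-c * u ^ 2) :=
          mul_le_mul_of_nonneg_right h4 (Real.exp_nonneg _)
      _ = (n.factorial : ℝ) * (2 / c) ^ n * Real.exp (-(c/2) * u ^ 2) := by
          rw [mul_assoc, ← Real.exp_add]; ring_nf
  have hnn : (0:ℝ) ≤ |u| ^ n * Real.exp (-c * u ^ 2) := by positivity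
  rw [Real.norm_eq_abs, abs_of_nonneg hnn]
  have : |u| ^ n * Real.exp (-c * u ^ 2) ≤ (1 + (u^2)^n) * Real.exp (-c * u ^ 2) :=
    mul_le_mul_of_nonneg_right habs (Real.exp_nonneg _)
  simp only [Pi.add_apply]
  calc |u| ^ n * Real.exp (-c * u ^ 2) ≤ (1 + (u^2)^n) * Real.exp (-c * u ^ 2) := this
    _ = Real.exp (-c * u ^ 2) + (u^2)^n * Real.exp (-c * u ^ 2) := by ring
    _ ≤ Real.exp (-c * u ^ 2) + (n.factorial : ℝ) * (2 / c) ^ n * Real.exp (-(c/2) * u ^ 2) := by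
        linarith [hkey]
    _ = Real.exp (-c * u ^ 2) + (n.factorial : ℝ) * (2 / c) ^ n * Real.exp (-(c/2) * u ^ 2) := rfl

lemma integrable_pow_gauss {c : ℝ} (hc : 0 < c) (n : ℕ) :
    Integrable (fun u : ℝ => u ^ n * Real.exp (-c * u ^ 2)) := by
  refine (integrable_abs_pow_gauss hc n).mono' ?_ ?_
  · have : Continuous fun u : ℝ => u ^ n * Real.exp (-c * u ^ 2) := by fun_prop
    exact this.aestronglyMeasurable
  · filter_upwards with u
    rw [Real.norm_eq_abs, abs_mul, abs_pow, abs_of_nonneg (Real.exp_nonneg _)]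



noncomputable def Mom (n : ℕ) : ℝ := ∫ u : ℝ, u ^ n * Real.exp (-(3/2 : ℝ) * u ^ 2)

lemma mom_zero : Mom 0 = Real.sqrt (π / (3/2)) := by
  rw [Mom]
  simpa using integral_gaussian (3/2 : ℝ)

lemma mom_odd (n : ℕ) (hn : Odd n) : Mom n = 0 := by
  apply integral_odd
  intro x
  rcases hn with ⟨k, hk⟩
  subst hk
  have : (-x) ^ (2*k+1) = - x ^ (2*k+1) := by
    rw [pow_succ, pow_succ, pow_mul, pow_mul, neg_sq]; ring
  rw [this]; ring_nf

lemma mom_rec (n : ℕ) : Mom (n + 2) = ((n : ℝ) + 1) / 3 * Mom n := by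
  have h32 : (0:ℝ) < 3/2 := by norm_num
  have hu : ∀ x : ℝ, HasDerivAt (fun y : ℝ => y ^ (n+1)) (((n:ℝ)+1) * x ^ n) x := by
    intro x
    simpa using hasDerivAt_pow (n+1) x
  have hv : ∀ x : ℝ, HasDerivAt (fun y : ℝ => Real.exp (-(3/2 : ℝ) * y ^ 2))
      ((-3 * x) * Real.exp (-(3/2 : ℝ) * x ^ 2)) x := by
    intro x
    have h1 : HasDerivAt (fun y : ℝ => -(3/2 : ℝ) * y ^ 2) (-3 * x) x := by
      have := (hasDerivAt_pow 2 x).const_mul (-(3/2 : ℝ))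
      simpa using this.congr_deriv (by ring)
    simpa [mul_comm] using h1.exp
  have key := integral_mul_deriv_eq_deriv_mul_of_integrable
    (u := fun y : ℝ => y ^ (n+1)) (v := fun y : ℝ => Real.exp (-(3/2 : ℝ) * y ^ 2))
    (u' := fun x : ℝ => ((n:ℝ)+1) * x ^ n)
    (v' := fun x : ℝ => (-3 * x) * Real.exp (-(3/2 : ℝ) * x ^ 2))
    (fun x _ => hu x) (fun x _ => hv x) ?_ ?_ ?_
  · have e1 : (∫ x : ℝ, (fun y : ℝ => y ^ (n+1)) x * ((-3 * x) * Real.exp (-(3/2:ℝ) * x ^ 2)))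
        = -3 * Mom (n+2) := by
      rw [Mom, ← integral_const_mul]
      congr 1; ext x; ring
    have e2 : (∫ x : ℝ, (((n:ℝ)+1) * x ^ n) * (fun y : ℝ => Real.exp (-(3/2:ℝ) * y ^ 2)) x)
        = ((n:ℝ)+1) * Mom n := by
      rw [Mom, ← integral_const_mul]
      congr 1; ext x; ring
    rw [e1, e2] at key
    linarith
  · have : Integrable (fun x : ℝ => (-3 : ℝ) * (x ^ (n+2) * Real.exp (-(3/2:ℝ) * x ^ 2))) :=
      (integrable_pow_gauss h32 (n+2)).const_mul _
    refine this.congr (Eventually.of_forall fun x => ?_)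
    simp only [Pi.mul_apply]; ring
  · have : Integrable (fun x : ℝ => ((n:ℝ)+1) * (x ^ n * Real.exp (-(3/2:ℝ) * x ^ 2))) :=
      (integrable_pow_gauss h32 n).const_mul _
    refine this.congr (Eventually.of_forall fun x => ?_)
    simp only [Pi.mul_apply]; ring
  · have : Integrable (fun x : ℝ => x ^ (n+1) * Real.exp (-(3/2:ℝ) * x ^ 2)) :=
      integrable_pow_gauss h32 (n+1)
    refine this.congr (Eventually.of_forall fun x => ?_)
    simp only [Pi.mul_apply]

lemma taylor_step {g G : ℝ → ℝ} (hg : Continuous g)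
    (hd : ∀ x, HasDerivAt G (g x) x) (h0 : G 0 = 0) {n : ℕ}
    (hb : ∀ x, |g x| ≤ |x| ^ n * Real.exp |x|) (x : ℝ) :
    |G x| ≤ |x| ^ (n+1) * Real.exp |x| := by
  have hint : G x = ∫ t in (0:ℝ)..x, g t := by
    rw [intervalIntegral.integral_eq_sub_of_hasDerivAt (fun t _ => hd t)
      (hg.intervalIntegrable _ _), h0, sub_zero]
  have hbd : ∀ t ∈ Set.uIoc (0:ℝ) x, ‖g t‖ ≤ |x| ^ n * Real.exp |x| := by
    intro t ht
    have h1 : |t| ≤ |x| := by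
      rcases Set.mem_uIoc.mp ht with h | h
      · rw [abs_of_pos h.1, abs_of_nonneg (h.1.le.trans h.2)]; exact h.2
      · rw [abs_of_nonpos h.2, abs_of_nonpos (h.1.trans_le h.2).le]; linarith [h.1]
    calc ‖g t‖ = |g t| := rfl
      _ ≤ |t| ^ n * Real.exp |t| := hb t
      _ ≤ |x| ^ n * Real.exp |x| := by
          apply mul_le_mul (pow_le_pow_left₀ (abs_nonneg t) h1 n)
            (Real.exp_le_exp.mpr h1) (Real.exp_nonneg _) (by positivity)
  have := intervalIntegral.norm_integral_le_of_norm_le_const hbd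
  rw [hint]
  calc ‖∫ t in (0:ℝ)..x, g t‖ ≤ |x| ^ n * Real.exp |x| * |x - 0| := this
    _ = |x| ^ (n+1) * Real.exp |x| := by rw [sub_zero, pow_succ]; ring

lemma exp_taylor6 (x : ℝ) :
    |Real.exp x - (1 + x + x^2/2 + x^3/6 + x^4/24 + x^5/120)| ≤ |x| ^ 6 * Real.exp |x| := by
  have b0 : ∀ y : ℝ, |Real.exp y| ≤ |y| ^ 0 * Real.exp |y| := by
    intro y
    rw [abs_of_pos (Real.exp_pos y), pow_zero, one_mul]
    exact Real.exp_le_exp.mpr (le_abs_self y)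
  have d1 : ∀ y : ℝ, HasDerivAt (fun z : ℝ => Real.exp z - 1) (Real.exp y) y := by
    intro y; exact (Real.hasDerivAt_exp y).sub_const 1
  have b1 := taylor_step Real.continuous_exp d1 (by simp) b0
  have d2 : ∀ y : ℝ, HasDerivAt (fun z : ℝ => Real.exp z - (1 + z)) (Real.exp y - 1) y := by
    intro y
    have hp : HasDerivAt (fun z : ℝ => 1 + z) 1 y := by
      simpa using (hasDerivAt_id y).const_add (1:ℝ)
    exact (Real.hasDerivAt_exp y).sub hp
  have b2 := taylor_step (by fun_prop) d2 (by norm_num) b1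
  have d3 : ∀ y : ℝ, HasDerivAt (fun z : ℝ => Real.exp z - (1 + z + z^2/2))
      (Real.exp y - (1 + y)) y := by
    intro y
    have hp : HasDerivAt (fun z : ℝ => 1 + z + z^2/2) (1 + y) y := by
      have h := (((hasDerivAt_id y).const_add (1:ℝ)).add ((hasDerivAt_pow 2 y).div_const 2))
      refine h.congr_deriv ?_
      first
      | (simp [pow_one]; ring)
      | simp [pow_one]
    exact (Real.hasDerivAt_exp y).sub hp
  have b3 := taylor_step (by fun_prop) d3 (by norm_num) b2
  have d4 : ∀ y : ℝ, HasDerivAt (fun z : ℝ => Real.exp z - (1 + z + z^2/2 + z^3/6))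
      (Real.exp y - (1 + y + y^2/2)) y := by
    intro y
    have hp : HasDerivAt (fun z : ℝ => 1 + z + z^2/2 + z^3/6) (1 + y + y^2/2) y := by
      have h := ((((hasDerivAt_id y).const_add (1:ℝ)).add
        ((hasDerivAt_pow 2 y).div_const 2)).add ((hasDerivAt_pow 3 y).div_const 6))
      refine h.congr_deriv ?_
      first
      | (simp [pow_one]; ring)
      | simp [pow_one]
    exact (Real.hasDerivAt_exp y).sub hp
  have b4 := taylor_step (by fun_prop) d4 (by norm_num) b3
  have d5 : ∀ y : ℝ, HasDerivAt (fun z : ℝ => Real.exp z - (1 + z + z^2/2 + z^3/6 + z^4/24))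
      (Real.exp y - (1 + y + y^2/2 + y^3/6)) y := by
    intro y
    have hp : HasDerivAt (fun z : ℝ => 1 + z + z^2/2 + z^3/6 + z^4/24)
        (1 + y + y^2/2 + y^3/6) y := by
      have h := (((((hasDerivAt_id y).const_add (1:ℝ)).add
        ((hasDerivAt_pow 2 y).div_const 2)).add ((hasDerivAt_pow 3 y).div_const 6)).add
        ((hasDerivAt_pow 4 y).div_const 24))
      refine h.congr_deriv ?_
      first
      | (simp [pow_one]; ring)
      | simp [pow_one]
    exact (Real.hasDerivAt_exp y).sub hp
  have b5 := taylor_step (by fun_prop) d5 (by norm_num) b4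
  have d6 : ∀ y : ℝ,
      HasDerivAt (fun z : ℝ => Real.exp z - (1 + z + z^2/2 + z^3/6 + z^4/24 + z^5/120))
      (Real.exp y - (1 + y + y^2/2 + y^3/6 + y^4/24)) y := by
    intro y
    have hp : HasDerivAt (fun z : ℝ => 1 + z + z^2/2 + z^3/6 + z^4/24 + z^5/120)
        (1 + y + y^2/2 + y^3/6 + y^4/24) y := by
      have h := ((((((hasDerivAt_id y).const_add (1:ℝ)).add
        ((hasDerivAt_pow 2 y).div_const 2)).add ((hasDerivAt_pow 3 y).div_const 6)).add
        ((hasDerivAt_pow 4 y).div_const 24)).add ((hasDerivAt_pow 5 y).div_const 120))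
      refine h.congr_deriv ?_
      first
      | (simp [pow_one]; ring)
      | simp [pow_one]
    exact (Real.hasDerivAt_exp y).sub hp
  have b6 := taylor_step (by fun_prop) d6 (by norm_num) b5
  exact b6 x

noncomputable def S : ℝ := Real.sqrt (π / (3/2))

lemma mom0 : Mom 0 = S := mom_zero

lemma mom2 : Mom 2 = S * (1/3) := by
  have := mom_rec 0; rw [mom0] at this; rw [this]; norm_num; ring

lemma mom4 : Mom 4 = S * (1/3) := by
  have := mom_rec 2; rw [mom2] at this; rw [this]; norm_num

lemma mom6 : Mom 6 = S * (5/9) := by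
  have := mom_rec 4; rw [mom4] at this; rw [this]; norm_num; ring

lemma mom8 : Mom 8 = S * (35/27) := by
  have := mom_rec 6; rw [mom6] at this; rw [this]; norm_num; ring

lemma mom10 : Mom 10 = S * (35/9) := by
  have := mom_rec 8; rw [mom8] at this; rw [this]; norm_num; ring

lemma mom12 : Mom 12 = S * (385/27) := by
  have := mom_rec 10; rw [mom10] at this; rw [this]; norm_num; ring

lemma poly_integral (ε : ℝ) :
    (∫ u : ℝ, (1 + ε*(2*u - u^3) + ε^2*(u^2 - 9/4*u^4 + 1/2*u^6)
      + ε^3*(-(3/2)*u^5 + 5/4*u^7 - 1/6*u^9)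
      + ε^4*(-(1/4)*u^6 + 33/32*u^8 - 11/24*u^10 + 1/24*u^12)
      + ε^5*(5/16*u^9 - 43/96*u^11 + 1/8*u^13 - 1/120*u^15))
        * Real.exp (-(3/2:ℝ)*u^2))
    = S * (1 - 5/36*ε^2 + 25/2592*ε^4) := by
  have h32 : (0:ℝ) < 3/2 := by norm_num
  set C : ℕ → ℝ := fun j => ([1, 2*ε, ε^2, -ε, -(9/4)*ε^2, -(3/2)*ε^3, ε^2/2 - ε^4/4,
    (5/4)*ε^3, (33/32)*ε^4, -ε^3/6 + (5/16)*ε^5, -(11/24)*ε^4, -(43/96)*ε^5,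
    ε^4/24, ε^5/8, 0, -(1/120)*ε^5] : List ℝ).getD j 0 with hC
  have h1 : ∀ u : ℝ, (1 + ε*(2*u - u^3) + ε^2*(u^2 - 9/4*u^4 + 1/2*u^6)
      + ε^3*(-(3/2)*u^5 + 5/4*u^7 - 1/6*u^9)
      + ε^4*(-(1/4)*u^6 + 33/32*u^8 - 11/24*u^10 + 1/24*u^12)
      + ε^5*(5/16*u^9 - 43/96*u^11 + 1/8*u^13 - 1/120*u^15))
        * Real.exp (-(3/2:ℝ)*u^2)
      = ∑ j ∈ Finset.range 16, C j * (u ^ j * Real.exp (-(3/2:ℝ)*u^2)) := by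
    intro u
    rw [Finset.sum_range_succ, Finset.sum_range_succ, Finset.sum_range_succ,
      Finset.sum_range_succ, Finset.sum_range_succ, Finset.sum_range_succ,
      Finset.sum_range_succ, Finset.sum_range_succ, Finset.sum_range_succ,
      Finset.sum_range_succ, Finset.sum_range_succ, Finset.sum_range_succ,
      Finset.sum_range_succ, Finset.sum_range_succ, Finset.sum_range_succ,
      Finset.sum_range_succ, Finset.sum_range_zero]
    simp only [hC, List.getD]
    norm_num
    ring
  rw [integral_congr_ae (Eventually.of_forall h1)]
  rw [integral_finset_sum _ (fun j _ => ((integrable_pow_gauss h32 j).const_mul (C j)))]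
  have h2 : ∀ j, (∫ u : ℝ, C j * (u ^ j * Real.exp (-(3/2:ℝ)*u^2))) = C j * Mom j := by
    intro j; rw [integral_const_mul]; rfl
  rw [Finset.sum_congr rfl fun j _ => h2 j]
  have o1 : Mom 1 = 0 := mom_odd 1 ⟨0, by norm_num⟩
  have o3 : Mom 3 = 0 := mom_odd 3 ⟨1, by norm_num⟩
  have o5 : Mom 5 = 0 := mom_odd 5 ⟨2, by norm_num⟩
  have o7 : Mom 7 = 0 := mom_odd 7 ⟨3, by norm_num⟩
  have o9 : Mom 9 = 0 := mom_odd 9 ⟨4, by norm_num⟩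
  have o11 : Mom 11 = 0 := mom_odd 11 ⟨5, by norm_num⟩
  have o13 : Mom 13 = 0 := mom_odd 13 ⟨6, by norm_num⟩
  have o15 : Mom 15 = 0 := mom_odd 15 ⟨7, by norm_num⟩
  rw [Finset.sum_range_succ, Finset.sum_range_succ, Finset.sum_range_succ,
    Finset.sum_range_succ, Finset.sum_range_succ, Finset.sum_range_succ,
    Finset.sum_range_succ, Finset.sum_range_succ, Finset.sum_range_succ,
    Finset.sum_range_succ, Finset.sum_range_succ, Finset.sum_range_succ,
    Finset.sum_range_succ, Finset.sum_range_succ, Finset.sum_range_succ,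
    Finset.sum_range_succ, Finset.sum_range_zero]
  simp only [hC, List.getD]
  norm_num
  rw [o1, o3, o5, o7, o9, o11, o13, o15, mom0, mom2, mom4, mom6, mom8, mom10, mom12]
  ring

noncomputable def Nb (v : ℝ) : ℝ :=
  1/32*v^10 + 73/384*v^12 + 7/192*v^13 + 55/384*v^14 + 29/384*v^15
  + 1477/30720*v^16 + 191/5120*v^17 + 137/6144*v^18 + 49/6144*v^19 + 67/40960*v^20
  + 11/61440*v^21 + 1/122880*v^22

noncomputable def Bf (u : ℝ) : ℝ :=
  4*(1+|u|)^2*u^18*Real.exp (-(1/4:ℝ)*u^2)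
  + u^6*(1+|u|)^2*Real.exp (-(1/2:ℝ)*u^2)
  + 14*u^6*(1+|u|)^15*Real.exp (-(3/2:ℝ)*u^2)
  + Nb |u| * Real.exp (-(3/2:ℝ)*u^2)

lemma Bf_nonneg (u : ℝ) : 0 ≤ Bf u := by
  unfold Bf Nb; positivity

lemma one_add_abs_pow_integrable {c : ℝ} (hc : 0 < c) (m : ℕ) :
    Integrable (fun u : ℝ => (1+|u|)^m * Real.exp (-c*u^2)) := by
  refine Integrable.mono' (((integrable_exp_neg_mul_sq hc).const_mul ((2:ℝ)^m)).add
    ((integrable_abs_pow_gauss hc m).const_mul ((2:ℝ)^m)))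
    (Continuous.aestronglyMeasurable (by fun_prop)) ?_
  filter_upwards with u
  have hv : (0:ℝ) ≤ |u| := abs_nonneg u
  have hkey : (1+|u|)^m ≤ 2^m * (1 + |u|^m) := by
    rcases le_total (|u|) 1 with h | h
    · have h1 : (1+|u|)^m ≤ 2^m := pow_le_pow_left₀ (by linarith) (by linarith) m
      have h2 : (0:ℝ) ≤ |u|^m := pow_nonneg hv m
      nlinarith [pow_pos (by norm_num : (0:ℝ) < 2) m]
    · have h1 : (1+|u|)^m ≤ (2*|u|)^m := pow_le_pow_left₀ (by linarith) (by linarith) m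
      have h2 : ((2:ℝ)*|u|)^m = 2^m * |u|^m := mul_pow 2 (|u|) m
      nlinarith [pow_pos (by norm_num : (0:ℝ) < 2) m]
  have he : (0:ℝ) ≤ Real.exp (-c*u^2) := (Real.exp_pos _).le
  rw [Real.norm_eq_abs, abs_of_nonneg (by positivity)]
  simp only [Pi.add_apply]
  calc (1+|u|)^m * Real.exp (-c*u^2) ≤ (2^m * (1 + |u|^m)) * Real.exp (-c*u^2) :=
        mul_le_mul_of_nonneg_right hkey he
    _ = 2^m * Real.exp (-c*u^2) + 2^m * (|u|^m * Real.exp (-c*u^2)) := by ring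

lemma integrable_dom {F : ℝ → ℝ} (hF : Continuous F) {c : ℝ} (hc : 0 < c) (C : ℝ) (m : ℕ)
    (h : ∀ u, |F u| ≤ C * ((1+|u|)^m * Real.exp (-c*u^2))) : Integrable F := by
  refine Integrable.mono' ((one_add_abs_pow_integrable hc m).const_mul C)
    hF.aestronglyMeasurable ?_
  filter_upwards with u
  exact h u

lemma Bf_integrable : Integrable Bf := by
  have h14 : (0:ℝ) < 1/4 := by norm_num
  have h12 : (0:ℝ) < 1/2 := by norm_num
  have h32 : (0:ℝ) < 3/2 := by norm_num
  have habs : ∀ (u : ℝ) (j : ℕ), |u|^j ≤ (1+|u|)^j := fun u j =>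
    pow_le_pow_left₀ (abs_nonneg u) (by linarith [abs_nonneg u]) j
  have hup : ∀ (u : ℝ) (j : ℕ), u^j ≤ (1+|u|)^j := fun u j =>
    ((le_abs_self _).trans_eq (abs_pow u j)).trans (habs u j)
  have hmono : ∀ (u : ℝ) (i j : ℕ), i ≤ j → (1+|u|)^i ≤ (1+|u|)^j := fun u i j hij =>
    pow_le_pow_right₀ (by linarith [abs_nonneg u]) hij
  have p1 : Integrable (fun u : ℝ => 4*(1+|u|)^2*u^18*Real.exp (-(1/4:ℝ)*u^2)) := by
    refine integrable_dom (by fun_prop) h14 4 20 fun u => ?_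
    have h1 : (0:ℝ) ≤ (1+|u|)^2 := by positivity
    rw [abs_of_nonneg (by positivity)]
    have h2 : u^18 ≤ (1+|u|)^18 := hup u 18
    have h3 : (1+|u|)^2 * u^18 ≤ (1+|u|)^2 * (1+|u|)^18 :=
      mul_le_mul_of_nonneg_left h2 h1
    have h4 : (1+|u|)^2 * (1+|u|)^18 = (1+|u|)^20 := by rw [← pow_add]
    nlinarith [(Real.exp_pos (-(1/4:ℝ)*u^2)).le, h3, h4.le, h4.ge]
  have p2 : Integrable (fun u : ℝ => u^6*(1+|u|)^2*Real.exp (-(1/2:ℝ)*u^2)) := by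
    refine integrable_dom (by fun_prop) h12 1 8 fun u => ?_
    rw [abs_of_nonneg (by positivity), one_mul]
    have h2 : u^6 ≤ (1+|u|)^6 := hup u 6
    have h3 : u^6*(1+|u|)^2 ≤ (1+|u|)^6 * (1+|u|)^2 :=
      mul_le_mul_of_nonneg_right h2 (by positivity)
    have h4 : (1+|u|)^6 * (1+|u|)^2 = (1+|u|)^8 := by rw [← pow_add]
    nlinarith [(Real.exp_pos (-(1/2:ℝ)*u^2)).le, h3, h4.le, h4.ge]
  have p3 : Integrable (fun u : ℝ => 14*u^6*(1+|u|)^15*Real.exp (-(3/2:ℝ)*u^2)) := by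
    refine integrable_dom (by fun_prop) h32 14 21 fun u => ?_
    rw [abs_of_nonneg (by positivity)]
    have h2 : u^6 ≤ (1+|u|)^6 := hup u 6
    have h3 : u^6*(1+|u|)^15 ≤ (1+|u|)^6 * (1+|u|)^15 :=
      mul_le_mul_of_nonneg_right h2 (by positivity)
    have h4 : (1+|u|)^6 * (1+|u|)^15 = (1+|u|)^21 := by rw [← pow_add]
    nlinarith [(Real.exp_pos (-(3/2:ℝ)*u^2)).le, h3, h4.le, h4.ge]
  have p4 : Integrable (fun u : ℝ => Nb |u| * Real.exp (-(3/2:ℝ)*u^2)) := by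
    refine integrable_dom (by unfold Nb; fun_prop) h32 1 22 fun u => ?_
    have hNb : Nb |u| ≤ (1+|u|)^22 := by
      have hb : ∀ j : ℕ, j ≤ 22 → |u|^j ≤ (1+|u|)^22 :=
        fun j hj => (habs u j).trans (hmono u j 22 hj)
      unfold Nb
      linarith [hb 10 (by norm_num), hb 12 (by norm_num), hb 13 (by norm_num),
        hb 14 (by norm_num), hb 15 (by norm_num), hb 16 (by norm_num), hb 17 (by norm_num),
        hb 18 (by norm_num), hb 19 (by norm_num), hb 20 (by norm_num), hb 21 (by norm_num),
        hb 22 (by norm_num), pow_nonneg (abs_nonneg u) 10, pow_nonneg (abs_nonneg u) 22]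
    have hNb0 : 0 ≤ Nb |u| := by unfold Nb; positivity
    rw [abs_of_nonneg (by positivity), one_mul]
    exact mul_le_mul_of_nonneg_right hNb (Real.exp_pos _).le
  have := ((p1.add p2).add p3).add p4
  refine this.congr (Eventually.of_forall fun u => ?_)
  simp only [Pi.add_apply]; rw [Bf]

lemma abs_add4 (a b c d : ℝ) : |a+b+c+d| ≤ |a|+|b|+|c|+|d| := by
  calc |a+b+c+d| ≤ |a+b+c| + |d| := abs_add_le _ _
    _ ≤ (|a+b| + |c|) + |d| := by linarith [abs_add_le (a+b) c]
    _ ≤ ((|a|+|b|) + |c|) + |d| := by linarith [abs_add_le a b]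
    _ = |a|+|b|+|c|+|d| := by ring

lemma abs_add6 (a b c d e f : ℝ) : |a+b+c+d+e+f| ≤ |a|+|b|+|c|+|d|+|e|+|f| := by
  calc |a+b+c+d+e+f| ≤ |a+b+c+d| + |e| + |f| := by
        have h1 := abs_add_le (a+b+c+d+e) f
        have h2 := abs_add_le (a+b+c+d) e
        linarith
    _ ≤ |a|+|b|+|c|+|d|+|e|+|f| := by linarith [abs_add4 a b c d]

lemma abs_add7 (a b c d e f g : ℝ) : |a+b+c+d+e+f+g| ≤ |a|+|b|+|c|+|d|+|e|+|f|+|g| := by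
  calc |a+b+c+d+e+f+g| ≤ |a+b+c+d+e+f| + |g| := abs_add_le _ _
    _ ≤ |a|+|b|+|c|+|d|+|e|+|f|+|g| := by linarith [abs_add6 a b c d e f]

set_option maxHeartbeats 1000000 in
lemma P_bound {ε : ℝ} (hε : 0 < ε) (hε1 : ε ≤ 1) (u : ℝ) :
    |1 + ε*(2*u - u^3) + ε^2*(u^2 - 9/4*u^4 + 1/2*u^6)
      + ε^3*(-(3/2)*u^5 + 5/4*u^7 - 1/6*u^9)
      + ε^4*(-(1/4)*u^6 + 33/32*u^8 - 11/24*u^10 + 1/24*u^12)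
      + ε^5*(5/16*u^9 - 43/96*u^11 + 1/8*u^13 - 1/120*u^15)|
    ≤ 14*(1+|u|)^15 := by
  have hv : (0:ℝ) ≤ |u| := abs_nonneg u
  have hle : ∀ j : ℕ, u^j ≤ |u|^j := fun j => (le_abs_self _).trans_eq (abs_pow u j)
  have hge : ∀ j : ℕ, -(|u|^j) ≤ u^j := fun j => by
    have := neg_abs_le (u^j); rwa [abs_pow] at this
  have hX : ∀ j : ℕ, j ≤ 15 → |u|^j ≤ (1+|u|)^15 := fun j hj =>
    (pow_le_pow_left₀ hv (by linarith) j).trans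
      (pow_le_pow_right₀ (by linarith) hj)
  have hXone : (1:ℝ) ≤ (1+|u|)^15 := one_le_pow₀ (by linarith)
  have hek : ∀ k : ℕ, ε^k ≤ 1 := fun k => pow_le_one₀ hε.le hε1
  have hg1 : |2*u - u^3| ≤ 2*|u| + |u|^3 := by
    apply abs_le.mpr
    constructor <;> linarith [hle 1, hge 1, hle 3, hge 3]
  have hg2 : |u^2 - 9/4*u^4 + 1/2*u^6| ≤ |u|^2 + 9/4*|u|^4 + 1/2*|u|^6 := by
    apply abs_le.mpr
    constructor <;> linarith [hle 2, hge 2, hle 4, hge 4, hle 6, hge 6]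
  have hg3 : |(-(3/2)*u^5 + 5/4*u^7 - 1/6*u^9)| ≤ 3/2*|u|^5 + 5/4*|u|^7 + 1/6*|u|^9 := by
    apply abs_le.mpr
    constructor <;> linarith [hle 5, hge 5, hle 7, hge 7, hle 9, hge 9]
  have hg4 : |(-(1/4)*u^6 + 33/32*u^8 - 11/24*u^10 + 1/24*u^12)|
      ≤ 1/4*|u|^6 + 33/32*|u|^8 + 11/24*|u|^10 + 1/24*|u|^12 := by
    apply abs_le.mpr
    constructor <;> linarith [hle 6, hge 6, hle 8, hge 8, hle 10, hge 10, hle 12, hge 12]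
  have hg5 : |(5/16*u^9 - 43/96*u^11 + 1/8*u^13 - 1/120*u^15)|
      ≤ 5/16*|u|^9 + 43/96*|u|^11 + 1/8*|u|^13 + 1/120*|u|^15 := by
    apply abs_le.mpr
    constructor <;> linarith [hle 9, hge 9, hle 11, hge 11, hle 13, hge 13, hle 15, hge 15]
  have tri := abs_add6 (1:ℝ) (ε*(2*u - u^3)) (ε^2*(u^2 - 9/4*u^4 + 1/2*u^6))
    (ε^3*(-(3/2)*u^5 + 5/4*u^7 - 1/6*u^9))
    (ε^4*(-(1/4)*u^6 + 33/32*u^8 - 11/24*u^10 + 1/24*u^12))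
    (ε^5*(5/16*u^9 - 43/96*u^11 + 1/8*u^13 - 1/120*u^15))
  have hm : ∀ (k : ℕ) (A C : ℝ), |A| ≤ C → |ε^k * A| ≤ C := by
    intro k A C hAC
    rw [abs_mul, abs_of_nonneg (pow_nonneg hε.le k)]
    calc ε^k * |A| ≤ 1 * |A| := mul_le_mul_of_nonneg_right (hek k) (abs_nonneg A)
      _ = |A| := one_mul _
      _ ≤ C := hAC
  have b1 := hm 1 _ _ hg1
  rw [pow_one] at b1
  have b2 := hm 2 _ _ hg2
  have b3 := hm 3 _ _ hg3
  have b4 := hm 4 _ _ hg4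
  have b5 := hm 5 _ _ hg5
  have habs1 : |(1:ℝ)| = 1 := abs_one
  calc |1 + ε*(2*u - u^3) + ε^2*(u^2 - 9/4*u^4 + 1/2*u^6)
      + ε^3*(-(3/2)*u^5 + 5/4*u^7 - 1/6*u^9)
      + ε^4*(-(1/4)*u^6 + 33/32*u^8 - 11/24*u^10 + 1/24*u^12)
      + ε^5*(5/16*u^9 - 43/96*u^11 + 1/8*u^13 - 1/120*u^15)|
      ≤ 1 + (2*|u| + |u|^3) + (|u|^2 + 9/4*|u|^4 + 1/2*|u|^6)
        + (3/2*|u|^5 + 5/4*|u|^7 + 1/6*|u|^9)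
        + (1/4*|u|^6 + 33/32*|u|^8 + 11/24*|u|^10 + 1/24*|u|^12)
        + (5/16*|u|^9 + 43/96*|u|^11 + 1/8*|u|^13 + 1/120*|u|^15) := by
        linarith [tri, b1, b2, b3, b4, b5, habs1]
    _ ≤ 14*(1+|u|)^15 := by
        linarith [hX 1 (by norm_num), hX 2 (by norm_num), hX 3 (by norm_num),
          hX 4 (by norm_num), hX 5 (by norm_num), hX 6 (by norm_num), hX 7 (by norm_num),
          hX 8 (by norm_num), hX 9 (by norm_num), hX 10 (by norm_num), hX 11 (by norm_num),
          hX 12 (by norm_num), hX 13 (by norm_num), hX 15 (by norm_num), hXone]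

set_option maxHeartbeats 1000000 in
lemma Dt_bound {ε : ℝ} (hε : 0 < ε) (hε1 : ε ≤ 1) (u : ℝ) :
    |1/32*u^10 - 73/384*u^12 + 9/64*u^14 - 13/480*u^16
      + ε*(-(7/192)*u^13 + 29/384*u^15 - 11/320*u^17)
      + ε^2*(-(1/384)*u^14 + 43/2048*u^16 - 17/768*u^18)
      + ε^3*(3/1024*u^17 - 49/6144*u^19)
      + ε^4*(1/6144*u^18 - 67/40960*u^20)
      + ε^5*(-(11/61440)*u^21)
      + ε^6*(-(1/122880)*u^22)|
    ≤ Nb |u| := by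
  have hv : (0:ℝ) ≤ |u| := abs_nonneg u
  have hle : ∀ j : ℕ, u^j ≤ |u|^j := fun j => (le_abs_self _).trans_eq (abs_pow u j)
  have hge : ∀ j : ℕ, -(|u|^j) ≤ u^j := fun j => by
    have := neg_abs_le (u^j); rwa [abs_pow] at this
  have hek : ∀ k : ℕ, ε^k ≤ 1 := fun k => pow_le_one₀ hε.le hε1
  have hm : ∀ (k : ℕ) (A C : ℝ), |A| ≤ C → |ε^k * A| ≤ C := by
    intro k A C hAC
    rw [abs_mul, abs_of_nonneg (pow_nonneg hε.le k)]
    calc ε^k * |A| ≤ 1 * |A| := mul_le_mul_of_nonneg_right (hek k) (abs_nonneg A)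
      _ = |A| := one_mul _
      _ ≤ C := hAC
  have hq0 : |1/32*u^10 - 73/384*u^12 + 9/64*u^14 - 13/480*u^16|
      ≤ 1/32*|u|^10 + 73/384*|u|^12 + 9/64*|u|^14 + 13/480*|u|^16 := by
    apply abs_le.mpr
    constructor <;> linarith [hle 10, hge 10, hle 12, hge 12, hle 14, hge 14, hle 16, hge 16]
  have hq1 : |(-(7/192)*u^13 + 29/384*u^15 - 11/320*u^17)|
      ≤ 7/192*|u|^13 + 29/384*|u|^15 + 11/320*|u|^17 := by
    apply abs_le.mpr
    constructor <;> linarith [hle 13, hge 13, hle 15, hge 15, hle 17, hge 17]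
  have hq2 : |(-(1/384)*u^14 + 43/2048*u^16 - 17/768*u^18)|
      ≤ 1/384*|u|^14 + 43/2048*|u|^16 + 17/768*|u|^18 := by
    apply abs_le.mpr
    constructor <;> linarith [hle 14, hge 14, hle 16, hge 16, hle 18, hge 18]
  have hq3 : |(3/1024*u^17 - 49/6144*u^19)| ≤ 3/1024*|u|^17 + 49/6144*|u|^19 := by
    apply abs_le.mpr
    constructor <;> linarith [hle 17, hge 17, hle 19, hge 19]
  have hq4 : |(1/6144*u^18 - 67/40960*u^20)| ≤ 1/6144*|u|^18 + 67/40960*|u|^20 := by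
    apply abs_le.mpr
    constructor <;> linarith [hle 18, hge 18, hle 20, hge 20]
  have hq5 : |(-(11/61440)*u^21)| ≤ 11/61440*|u|^21 := by
    apply abs_le.mpr
    constructor <;> linarith [hle 21, hge 21]
  have hq6 : |(-(1/122880)*u^22)| ≤ 1/122880*|u|^22 := by
    apply abs_le.mpr
    constructor <;> linarith [hle 22, hge 22]
  have tri := abs_add7 (1/32*u^10 - 73/384*u^12 + 9/64*u^14 - 13/480*u^16)
    (ε*(-(7/192)*u^13 + 29/384*u^15 - 11/320*u^17))
    (ε^2*(-(1/384)*u^14 + 43/2048*u^16 - 17/768*u^18))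
    (ε^3*(3/1024*u^17 - 49/6144*u^19))
    (ε^4*(1/6144*u^18 - 67/40960*u^20))
    (ε^5*(-(11/61440)*u^21))
    (ε^6*(-(1/122880)*u^22))
  have b1 := hm 1 _ _ hq1
  rw [pow_one] at b1
  have b2 := hm 2 _ _ hq2
  have b3 := hm 3 _ _ hq3
  have b4 := hm 4 _ _ hq4
  have b5 := hm 5 _ _ hq5
  have b6 := hm 6 _ _ hq6
  unfold Nb
  linarith [tri, hq0, b1, b2, b3, b4, b5, b6]

set_option maxHeartbeats 2000000 in
lemma pointwise_bound {ε : ℝ} (hε : 0 < ε) (hε1 : ε ≤ 1) (u : ℝ) :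
    |(1+ε*u)^2 * Real.exp (-(3/2:ℝ)*u^2 - (ε*u^3 + ε^2*u^4/4))
      - (1 + ε*(2*u - u^3) + ε^2*(u^2 - 9/4*u^4 + 1/2*u^6)
      + ε^3*(-(3/2)*u^5 + 5/4*u^7 - 1/6*u^9)
      + ε^4*(-(1/4)*u^6 + 33/32*u^8 - 11/24*u^10 + 1/24*u^12)
      + ε^5*(5/16*u^9 - 43/96*u^11 + 1/8*u^13 - 1/120*u^15)) * Real.exp (-(3/2:ℝ)*u^2)| ≤ ε^6 * Bf u := by
  have hv : (0:ℝ) ≤ |u| := abs_nonneg u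
  have hg : (0:ℝ) < Real.exp (-(3/2:ℝ)*u^2) := Real.exp_pos _
  have hsq : (1+ε*u)^2 ≤ (1+|u|)^2 := by
    have h1 : |1+ε*u| ≤ 1+|u| := by
      have h2 : |ε*u| = ε*|u| := by rw [abs_mul, abs_of_pos hε]
      have h3 : ε*|u| ≤ |u| := by nlinarith
      calc |1+ε*u| ≤ |(1:ℝ)| + |ε*u| := abs_add_le _ _
        _ = 1 + ε*|u| := by rw [abs_one, h2]
        _ ≤ 1 + |u| := by linarith
    calc (1+ε*u)^2 = |1+ε*u|^2 := (sq_abs _).symm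
      _ ≤ (1+|u|)^2 := pow_le_pow_left₀ (abs_nonneg _) h1 2
  have hexp : Real.exp (-(3/2:ℝ)*u^2 - (ε*u^3 + ε^2*u^4/4))
      = Real.exp (-(3/2:ℝ)*u^2) * Real.exp (-(ε*u^3 + ε^2*u^4/4)) := by
    rw [← Real.exp_add]; ring_nf
  rcases le_or_gt (ε*|u|) 1 with hcase | hcase
  · -- |εu| ≤ 1 : Taylor regime
    have hTb := exp_taylor6 (-(ε*u^3 + ε^2*u^4/4))
    rw [abs_neg] at hTb
    have hwabs : |(ε*u^3 + ε^2*u^4/4)| ≤ (5/4)*(ε*|u|^3) := by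
      have h1 : |(ε*u^3 + ε^2*u^4/4)| ≤ |ε*u^3| + |ε^2*u^4/4| := abs_add_le _ _
      have h2 : |ε*u^3| = ε*|u|^3 := by rw [abs_mul, abs_of_pos hε, abs_pow]
      have h3 : |ε^2*u^4/4| = ε^2*|u|^4/4 := by
        rw [abs_div, abs_mul, abs_pow, abs_pow, abs_of_pos hε]
        norm_num
      have h5 : ε*|u|^3*(ε*|u| - 1) ≤ 0 :=
        mul_nonpos_of_nonneg_of_nonpos (by positivity) (by linarith)
      have h4 : ε^2*|u|^4 ≤ ε*|u|^3 := by nlinarith [h5]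
      linarith [h1, h2.le, h3.le, h2.ge, h3.ge]
    have hwq : |(ε*u^3 + ε^2*u^4/4)| ≤ (5/4)*u^2 := by
      have h8 : (ε*|u|)*|u|^2 ≤ 1*|u|^2 := mul_le_mul_of_nonneg_right hcase (by positivity)
      have h9 : |u|^2 = u^2 := sq_abs u
      have h6 : ε*|u|^3 ≤ u^2 := by nlinarith [h8, h9.le, h9.ge]
      linarith [hwabs]
    have hDtb := Dt_bound hε hε1 u
    have hsplit : (1+ε*u)^2 * Real.exp (-(3/2:ℝ)*u^2 - (ε*u^3 + ε^2*u^4/4))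
        - (1 + ε*(2*u - u^3) + ε^2*(u^2 - 9/4*u^4 + 1/2*u^6)
      + ε^3*(-(3/2)*u^5 + 5/4*u^7 - 1/6*u^9)
      + ε^4*(-(1/4)*u^6 + 33/32*u^8 - 11/24*u^10 + 1/24*u^12)
      + ε^5*(5/16*u^9 - 43/96*u^11 + 1/8*u^13 - 1/120*u^15)) * Real.exp (-(3/2:ℝ)*u^2)
        = Real.exp (-(3/2:ℝ)*u^2)*((1+ε*u)^2*(Real.exp (-(ε*u^3 + ε^2*u^4/4)) - (1 + -(ε*u^3 + ε^2*u^4/4) + (-(ε*u^3 + ε^2*u^4/4))^2/2 + (-(ε*u^3 + ε^2*u^4/4))^3/6 + (-(ε*u^3 + ε^2*u^4/4))^4/24 + (-(ε*u^3 + ε^2*u^4/4))^5/120)))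
          + ε^6*(Real.exp (-(3/2:ℝ)*u^2)*(1/32*u^10 - 73/384*u^12 + 9/64*u^14 - 13/480*u^16
      + ε*(-(7/192)*u^13 + 29/384*u^15 - 11/320*u^17)
      + ε^2*(-(1/384)*u^14 + 43/2048*u^16 - 17/768*u^18)
      + ε^3*(3/1024*u^17 - 49/6144*u^19)
      + ε^4*(1/6144*u^18 - 67/40960*u^20)
      + ε^5*(-(11/61440)*u^21)
      + ε^6*(-(1/122880)*u^22))) := by
      rw [hexp]; ring
    rw [hsplit]
    have habs1 : |Real.exp (-(3/2:ℝ)*u^2)*((1+ε*u)^2*(Real.exp (-(ε*u^3 + ε^2*u^4/4)) - (1 + -(ε*u^3 + ε^2*u^4/4) + (-(ε*u^3 + ε^2*u^4/4))^2/2 + (-(ε*u^3 + ε^2*u^4/4))^3/6 + (-(ε*u^3 + ε^2*u^4/4))^4/24 + (-(ε*u^3 + ε^2*u^4/4))^5/120)))|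
        = Real.exp (-(3/2:ℝ)*u^2)*((1+ε*u)^2*|Real.exp (-(ε*u^3 + ε^2*u^4/4)) - (1 + -(ε*u^3 + ε^2*u^4/4) + (-(ε*u^3 + ε^2*u^4/4))^2/2 + (-(ε*u^3 + ε^2*u^4/4))^3/6 + (-(ε*u^3 + ε^2*u^4/4))^4/24 + (-(ε*u^3 + ε^2*u^4/4))^5/120)|) := by
      rw [abs_mul, abs_mul, abs_of_pos hg, abs_of_nonneg (sq_nonneg (1+ε*u))]
    have habs2 : |ε^6*(Real.exp (-(3/2:ℝ)*u^2)*(1/32*u^10 - 73/384*u^12 + 9/64*u^14 - 13/480*u^16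
      + ε*(-(7/192)*u^13 + 29/384*u^15 - 11/320*u^17)
      + ε^2*(-(1/384)*u^14 + 43/2048*u^16 - 17/768*u^18)
      + ε^3*(3/1024*u^17 - 49/6144*u^19)
      + ε^4*(1/6144*u^18 - 67/40960*u^20)
      + ε^5*(-(11/61440)*u^21)
      + ε^6*(-(1/122880)*u^22)))| = ε^6*(Real.exp (-(3/2:ℝ)*u^2)*|(1/32*u^10 - 73/384*u^12 + 9/64*u^14 - 13/480*u^16
      + ε*(-(7/192)*u^13 + 29/384*u^15 - 11/320*u^17)
      + ε^2*(-(1/384)*u^14 + 43/2048*u^16 - 17/768*u^18)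
      + ε^3*(3/1024*u^17 - 49/6144*u^19)
      + ε^4*(1/6144*u^18 - 67/40960*u^20)
      + ε^5*(-(11/61440)*u^21)
      + ε^6*(-(1/122880)*u^22))|) := by
      rw [abs_mul, abs_mul, abs_of_nonneg (pow_nonneg hε.le 6), abs_of_pos hg]
    have hXb : |Real.exp (-(ε*u^3 + ε^2*u^4/4)) - (1 + -(ε*u^3 + ε^2*u^4/4) + (-(ε*u^3 + ε^2*u^4/4))^2/2 + (-(ε*u^3 + ε^2*u^4/4))^3/6 + (-(ε*u^3 + ε^2*u^4/4))^4/24 + (-(ε*u^3 + ε^2*u^4/4))^5/120)|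
        ≤ ((5/4)*(ε*|u|^3))^6 * Real.exp ((5/4)*u^2) := by
      calc |Real.exp (-(ε*u^3 + ε^2*u^4/4)) - (1 + -(ε*u^3 + ε^2*u^4/4) + (-(ε*u^3 + ε^2*u^4/4))^2/2 + (-(ε*u^3 + ε^2*u^4/4))^3/6 + (-(ε*u^3 + ε^2*u^4/4))^4/24 + (-(ε*u^3 + ε^2*u^4/4))^5/120)| ≤ |(ε*u^3 + ε^2*u^4/4)|^6 * Real.exp |(ε*u^3 + ε^2*u^4/4)| := hTb
        _ ≤ ((5/4)*(ε*|u|^3))^6 * Real.exp ((5/4)*u^2) := by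
            apply mul_le_mul (pow_le_pow_left₀ (abs_nonneg _) hwabs 6)
              (Real.exp_le_exp.mpr hwq) (Real.exp_nonneg _) (by positivity)
    have hterm1 : Real.exp (-(3/2:ℝ)*u^2)*((1+ε*u)^2*|Real.exp (-(ε*u^3 + ε^2*u^4/4)) - (1 + -(ε*u^3 + ε^2*u^4/4) + (-(ε*u^3 + ε^2*u^4/4))^2/2 + (-(ε*u^3 + ε^2*u^4/4))^3/6 + (-(ε*u^3 + ε^2*u^4/4))^4/24 + (-(ε*u^3 + ε^2*u^4/4))^5/120)|)
        ≤ ε^6*(4*(1+|u|)^2*u^18*Real.exp (-(1/4:ℝ)*u^2)) := by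
      have hgm : Real.exp (-(3/2:ℝ)*u^2)*Real.exp ((5/4)*u^2) = Real.exp (-(1/4:ℝ)*u^2) := by
        rw [← Real.exp_add]; ring_nf
      have h18 : |u|^18 = u^18 := by rw [← abs_pow]; exact abs_of_nonneg (by positivity)
      have hstep : Real.exp (-(3/2:ℝ)*u^2)*((1+ε*u)^2*|Real.exp (-(ε*u^3 + ε^2*u^4/4)) - (1 + -(ε*u^3 + ε^2*u^4/4) + (-(ε*u^3 + ε^2*u^4/4))^2/2 + (-(ε*u^3 + ε^2*u^4/4))^3/6 + (-(ε*u^3 + ε^2*u^4/4))^4/24 + (-(ε*u^3 + ε^2*u^4/4))^5/120)|)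
          ≤ Real.exp (-(3/2:ℝ)*u^2)*((1+|u|)^2*(((5/4)*(ε*|u|^3))^6 * Real.exp ((5/4)*u^2))) := by
        apply mul_le_mul_of_nonneg_left _ hg.le
        apply mul_le_mul hsq hXb (abs_nonneg _) (by positivity)
      have heq : Real.exp (-(3/2:ℝ)*u^2)*((1+|u|)^2*(((5/4)*(ε*|u|^3))^6 * Real.exp ((5/4)*u^2)))
          = (5/4:ℝ)^6*(ε^6*((1+|u|)^2*(|u|^3)^6*(Real.exp (-(3/2:ℝ)*u^2)*Real.exp ((5/4)*u^2)))) := by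
        ring
      have heq2 : (|u|^3)^6 = u^18 := by rw [← pow_mul]; exact h18 ▸ rfl
      have hY : (0:ℝ) ≤ ε^6*((1+|u|)^2*u^18*Real.exp (-(1/4:ℝ)*u^2)) := by positivity
      calc Real.exp (-(3/2:ℝ)*u^2)*((1+ε*u)^2*|Real.exp (-(ε*u^3 + ε^2*u^4/4)) - (1 + -(ε*u^3 + ε^2*u^4/4) + (-(ε*u^3 + ε^2*u^4/4))^2/2 + (-(ε*u^3 + ε^2*u^4/4))^3/6 + (-(ε*u^3 + ε^2*u^4/4))^4/24 + (-(ε*u^3 + ε^2*u^4/4))^5/120)|)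
          ≤ (5/4:ℝ)^6*(ε^6*((1+|u|)^2*(|u|^3)^6*(Real.exp (-(3/2:ℝ)*u^2)*Real.exp ((5/4)*u^2)))) := by
            rw [← heq]; exact hstep
        _ = (5/4:ℝ)^6*(ε^6*((1+|u|)^2*u^18*Real.exp (-(1/4:ℝ)*u^2))) := by
            rw [heq2, hgm]
        _ ≤ 4*(ε^6*((1+|u|)^2*u^18*Real.exp (-(1/4:ℝ)*u^2))) := by nlinarith [hY]
        _ = ε^6*(4*(1+|u|)^2*u^18*Real.exp (-(1/4:ℝ)*u^2)) := by ring
    have hterm2 : ε^6*(Real.exp (-(3/2:ℝ)*u^2)*|(1/32*u^10 - 73/384*u^12 + 9/64*u^14 - 13/480*u^16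
      + ε*(-(7/192)*u^13 + 29/384*u^15 - 11/320*u^17)
      + ε^2*(-(1/384)*u^14 + 43/2048*u^16 - 17/768*u^18)
      + ε^3*(3/1024*u^17 - 49/6144*u^19)
      + ε^4*(1/6144*u^18 - 67/40960*u^20)
      + ε^5*(-(11/61440)*u^21)
      + ε^6*(-(1/122880)*u^22))|) ≤ ε^6*(Nb |u| * Real.exp (-(3/2:ℝ)*u^2)) := by
      apply mul_le_mul_of_nonneg_left _ (pow_nonneg hε.le 6)
      calc Real.exp (-(3/2:ℝ)*u^2)*|(1/32*u^10 - 73/384*u^12 + 9/64*u^14 - 13/480*u^16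
      + ε*(-(7/192)*u^13 + 29/384*u^15 - 11/320*u^17)
      + ε^2*(-(1/384)*u^14 + 43/2048*u^16 - 17/768*u^18)
      + ε^3*(3/1024*u^17 - 49/6144*u^19)
      + ε^4*(1/6144*u^18 - 67/40960*u^20)
      + ε^5*(-(11/61440)*u^21)
      + ε^6*(-(1/122880)*u^22))| ≤ Real.exp (-(3/2:ℝ)*u^2)*(Nb |u|) := mul_le_mul_of_nonneg_left hDtb hg.le
        _ = Nb |u| * Real.exp (-(3/2:ℝ)*u^2) := by ring
    have hBf : 4*(1+|u|)^2*u^18*Real.exp (-(1/4:ℝ)*u^2) + Nb |u| * Real.exp (-(3/2:ℝ)*u^2) ≤ Bf u := by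
      unfold Bf
      have h2 : (0:ℝ) ≤ u^6*(1+|u|)^2*Real.exp (-(1/2:ℝ)*u^2) := by positivity
      have h3 : (0:ℝ) ≤ 14*u^6*(1+|u|)^15*Real.exp (-(3/2:ℝ)*u^2) := by positivity
      linarith
    calc |Real.exp (-(3/2:ℝ)*u^2)*((1+ε*u)^2*(Real.exp (-(ε*u^3 + ε^2*u^4/4)) - (1 + -(ε*u^3 + ε^2*u^4/4) + (-(ε*u^3 + ε^2*u^4/4))^2/2 + (-(ε*u^3 + ε^2*u^4/4))^3/6 + (-(ε*u^3 + ε^2*u^4/4))^4/24 + (-(ε*u^3 + ε^2*u^4/4))^5/120)))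
          + ε^6*(Real.exp (-(3/2:ℝ)*u^2)*(1/32*u^10 - 73/384*u^12 + 9/64*u^14 - 13/480*u^16
      + ε*(-(7/192)*u^13 + 29/384*u^15 - 11/320*u^17)
      + ε^2*(-(1/384)*u^14 + 43/2048*u^16 - 17/768*u^18)
      + ε^3*(3/1024*u^17 - 49/6144*u^19)
      + ε^4*(1/6144*u^18 - 67/40960*u^20)
      + ε^5*(-(11/61440)*u^21)
      + ε^6*(-(1/122880)*u^22)))|
        ≤ |Real.exp (-(3/2:ℝ)*u^2)*((1+ε*u)^2*(Real.exp (-(ε*u^3 + ε^2*u^4/4)) - (1 + -(ε*u^3 + ε^2*u^4/4) + (-(ε*u^3 + ε^2*u^4/4))^2/2 + (-(ε*u^3 + ε^2*u^4/4))^3/6 + (-(ε*u^3 + ε^2*u^4/4))^4/24 + (-(ε*u^3 + ε^2*u^4/4))^5/120)))|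
          + |ε^6*(Real.exp (-(3/2:ℝ)*u^2)*(1/32*u^10 - 73/384*u^12 + 9/64*u^14 - 13/480*u^16
      + ε*(-(7/192)*u^13 + 29/384*u^15 - 11/320*u^17)
      + ε^2*(-(1/384)*u^14 + 43/2048*u^16 - 17/768*u^18)
      + ε^3*(3/1024*u^17 - 49/6144*u^19)
      + ε^4*(1/6144*u^18 - 67/40960*u^20)
      + ε^5*(-(11/61440)*u^21)
      + ε^6*(-(1/122880)*u^22)))| := abs_add_le _ _
      _ = Real.exp (-(3/2:ℝ)*u^2)*((1+ε*u)^2*|Real.exp (-(ε*u^3 + ε^2*u^4/4)) - (1 + -(ε*u^3 + ε^2*u^4/4) + (-(ε*u^3 + ε^2*u^4/4))^2/2 + (-(ε*u^3 + ε^2*u^4/4))^3/6 + (-(ε*u^3 + ε^2*u^4/4))^4/24 + (-(ε*u^3 + ε^2*u^4/4))^5/120)|)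
          + ε^6*(Real.exp (-(3/2:ℝ)*u^2)*|(1/32*u^10 - 73/384*u^12 + 9/64*u^14 - 13/480*u^16
      + ε*(-(7/192)*u^13 + 29/384*u^15 - 11/320*u^17)
      + ε^2*(-(1/384)*u^14 + 43/2048*u^16 - 17/768*u^18)
      + ε^3*(3/1024*u^17 - 49/6144*u^19)
      + ε^4*(1/6144*u^18 - 67/40960*u^20)
      + ε^5*(-(11/61440)*u^21)
      + ε^6*(-(1/122880)*u^22))|) := by rw [habs1, habs2]
      _ ≤ ε^6*(4*(1+|u|)^2*u^18*Real.exp (-(1/4:ℝ)*u^2)) + ε^6*(Nb |u| * Real.exp (-(3/2:ℝ)*u^2)) :=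
          add_le_add hterm1 hterm2
      _ = ε^6*(4*(1+|u|)^2*u^18*Real.exp (-(1/4:ℝ)*u^2) + Nb |u| * Real.exp (-(3/2:ℝ)*u^2)) := by ring
      _ ≤ ε^6 * Bf u := mul_le_mul_of_nonneg_left hBf (pow_nonneg hε.le 6)
  · -- |εu| > 1 : tail regime
    have hu6 : (1:ℝ) ≤ ε^6*u^6 := by
      have h1 : (1:ℝ) ≤ (ε*|u|)^6 := one_le_pow₀ hcase.le
      have h6 : |u|^6 = u^6 := by rw [← abs_pow]; exact abs_of_nonneg (by positivity)
      calc (1:ℝ) ≤ (ε*|u|)^6 := h1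
        _ = ε^6*u^6 := by rw [mul_pow, h6]
    have hfb : (1+ε*u)^2 * Real.exp (-(3/2:ℝ)*u^2 - (ε*u^3 + ε^2*u^4/4))
        ≤ (1+|u|)^2*Real.exp (-(1/2:ℝ)*u^2) := by
      have hexple : Real.exp (-(3/2:ℝ)*u^2 - (ε*u^3 + ε^2*u^4/4)) ≤ Real.exp (-(1/2:ℝ)*u^2) :=
        Real.exp_le_exp.mpr (by nlinarith [sq_nonneg (u + ε*u^2/2)])
      apply mul_le_mul hsq hexple (Real.exp_nonneg _) (by positivity)
    have hPb := P_bound hε hε1 u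
    calc |(1+ε*u)^2 * Real.exp (-(3/2:ℝ)*u^2 - (ε*u^3 + ε^2*u^4/4))
          - (1 + ε*(2*u - u^3) + ε^2*(u^2 - 9/4*u^4 + 1/2*u^6)
      + ε^3*(-(3/2)*u^5 + 5/4*u^7 - 1/6*u^9)
      + ε^4*(-(1/4)*u^6 + 33/32*u^8 - 11/24*u^10 + 1/24*u^12)
      + ε^5*(5/16*u^9 - 43/96*u^11 + 1/8*u^13 - 1/120*u^15)) * Real.exp (-(3/2:ℝ)*u^2)|
        ≤ |(1+ε*u)^2 * Real.exp (-(3/2:ℝ)*u^2 - (ε*u^3 + ε^2*u^4/4))|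
          + |(1 + ε*(2*u - u^3) + ε^2*(u^2 - 9/4*u^4 + 1/2*u^6)
      + ε^3*(-(3/2)*u^5 + 5/4*u^7 - 1/6*u^9)
      + ε^4*(-(1/4)*u^6 + 33/32*u^8 - 11/24*u^10 + 1/24*u^12)
      + ε^5*(5/16*u^9 - 43/96*u^11 + 1/8*u^13 - 1/120*u^15)) * Real.exp (-(3/2:ℝ)*u^2)| := abs_sub _ _
      _ = (1+ε*u)^2 * Real.exp (-(3/2:ℝ)*u^2 - (ε*u^3 + ε^2*u^4/4))
          + |(1 + ε*(2*u - u^3) + ε^2*(u^2 - 9/4*u^4 + 1/2*u^6)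
      + ε^3*(-(3/2)*u^5 + 5/4*u^7 - 1/6*u^9)
      + ε^4*(-(1/4)*u^6 + 33/32*u^8 - 11/24*u^10 + 1/24*u^12)
      + ε^5*(5/16*u^9 - 43/96*u^11 + 1/8*u^13 - 1/120*u^15))| * Real.exp (-(3/2:ℝ)*u^2) := by
          rw [abs_of_nonneg (by positivity), abs_mul, abs_of_pos hg]
      _ ≤ (1+|u|)^2*Real.exp (-(1/2:ℝ)*u^2) + 14*(1+|u|)^15*Real.exp (-(3/2:ℝ)*u^2) :=
          add_le_add hfb (mul_le_mul_of_nonneg_right hPb hg.le)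
      _ ≤ (ε^6*u^6)*((1+|u|)^2*Real.exp (-(1/2:ℝ)*u^2) + 14*(1+|u|)^15*Real.exp (-(3/2:ℝ)*u^2)) :=
          le_mul_of_one_le_left (by positivity) hu6
      _ = ε^6*(u^6*(1+|u|)^2*Real.exp (-(1/2:ℝ)*u^2) + 14*u^6*(1+|u|)^15*Real.exp (-(3/2:ℝ)*u^2)) := by ring
      _ ≤ ε^6 * Bf u := by
          apply mul_le_mul_of_nonneg_left _ (pow_nonneg hε.le 6)
          unfold Bf
          have h1 : (0:ℝ) ≤ 4*(1+|u|)^2*u^18*Real.exp (-(1/4:ℝ)*u^2) := by positivity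
          have h4 : (0:ℝ) ≤ Nb |u| * Real.exp (-(3/2:ℝ)*u^2) := by
            unfold Nb; positivity
          linarith

lemma f_integrable {ε : ℝ} (hε : 0 < ε) (hε1 : ε ≤ 1) :
    Integrable (fun u : ℝ => (1+ε*u)^2 * Real.exp (-(3/2:ℝ)*u^2 - (ε*u^3 + ε^2*u^4/4))) := by
  refine integrable_dom (by fun_prop) (show (0:ℝ) < 1/2 by norm_num) 1 2 fun u => ?_
  rw [one_mul, abs_of_nonneg (by positivity)]
  have hsq : (1+ε*u)^2 ≤ (1+|u|)^2 := by
    have h2 : |ε*u| = ε*|u| := by rw [abs_mul, abs_of_pos hε]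
    have h3 : ε*|u| ≤ |u| := by nlinarith [abs_nonneg u]
    have h1 : |1+ε*u| ≤ 1+|u| := by
      calc |1+ε*u| ≤ |(1:ℝ)| + |ε*u| := abs_add_le _ _
        _ = 1 + ε*|u| := by rw [abs_one, h2]
        _ ≤ 1 + |u| := by linarith
    calc (1+ε*u)^2 = |1+ε*u|^2 := (sq_abs _).symm
      _ ≤ (1+|u|)^2 := pow_le_pow_left₀ (abs_nonneg _) h1 2
  have hexple : Real.exp (-(3/2:ℝ)*u^2 - (ε*u^3 + ε^2*u^4/4)) ≤ Real.exp (-(1/2)*u^2) :=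
    Real.exp_le_exp.mpr (by nlinarith [sq_nonneg (u + ε*u^2/2)])
  exact mul_le_mul hsq hexple (Real.exp_nonneg _) (by positivity)

lemma Pg_integrable {ε : ℝ} (hε : 0 < ε) (hε1 : ε ≤ 1) :
    Integrable (fun u : ℝ => (1 + ε*(2*u - u^3) + ε^2*(u^2 - 9/4*u^4 + 1/2*u^6)
      + ε^3*(-(3/2)*u^5 + 5/4*u^7 - 1/6*u^9)
      + ε^4*(-(1/4)*u^6 + 33/32*u^8 - 11/24*u^10 + 1/24*u^12)
      + ε^5*(5/16*u^9 - 43/96*u^11 + 1/8*u^13 - 1/120*u^15)) * Real.exp (-(3/2:ℝ)*u^2)) := by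
  refine integrable_dom (by fun_prop) (show (0:ℝ) < 3/2 by norm_num) 14 15 fun u => ?_
  rw [abs_mul, abs_of_pos (Real.exp_pos _)]
  calc |(1 + ε*(2*u - u^3) + ε^2*(u^2 - 9/4*u^4 + 1/2*u^6)
      + ε^3*(-(3/2)*u^5 + 5/4*u^7 - 1/6*u^9)
      + ε^4*(-(1/4)*u^6 + 33/32*u^8 - 11/24*u^10 + 1/24*u^12)
      + ε^5*(5/16*u^9 - 43/96*u^11 + 1/8*u^13 - 1/120*u^15))| * Real.exp (-(3/2:ℝ)*u^2)
      ≤ (14*(1+|u|)^15) * Real.exp (-(3/2:ℝ)*u^2) :=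
        mul_le_mul_of_nonneg_right (P_bound hε hε1 u) (Real.exp_nonneg _)
    _ = 14*((1+|u|)^15 * Real.exp (-(3/2:ℝ)*u^2)) := by ring

lemma core {ε : ℝ} (hε : 0 < ε) (hε1 : ε ≤ 1) :
    |(∫ u : ℝ, (1+ε*u)^2 * Real.exp (-(3/2:ℝ)*u^2 - (ε*u^3 + ε^2*u^4/4)))
      - S * (1 - 5/36*ε^2 + 25/2592*ε^4)| ≤ (∫ u : ℝ, Bf u) * ε^6 := by
  rw [← poly_integral ε]
  rw [← integral_sub (f_integrable hε hε1) (Pg_integrable hε hε1)]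
  have h1 : |∫ u : ℝ, ((1+ε*u)^2 * Real.exp (-(3/2:ℝ)*u^2 - (ε*u^3 + ε^2*u^4/4))
      - (1 + ε*(2*u - u^3) + ε^2*(u^2 - 9/4*u^4 + 1/2*u^6)
      + ε^3*(-(3/2)*u^5 + 5/4*u^7 - 1/6*u^9)
      + ε^4*(-(1/4)*u^6 + 33/32*u^8 - 11/24*u^10 + 1/24*u^12)
      + ε^5*(5/16*u^9 - 43/96*u^11 + 1/8*u^13 - 1/120*u^15)) * Real.exp (-(3/2:ℝ)*u^2))|
      ≤ ∫ u : ℝ, |(1+ε*u)^2 * Real.exp (-(3/2:ℝ)*u^2 - (ε*u^3 + ε^2*u^4/4))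
      - (1 + ε*(2*u - u^3) + ε^2*(u^2 - 9/4*u^4 + 1/2*u^6)
      + ε^3*(-(3/2)*u^5 + 5/4*u^7 - 1/6*u^9)
      + ε^4*(-(1/4)*u^6 + 33/32*u^8 - 11/24*u^10 + 1/24*u^12)
      + ε^5*(5/16*u^9 - 43/96*u^11 + 1/8*u^13 - 1/120*u^15)) * Real.exp (-(3/2:ℝ)*u^2)| := by
    have hni :=
      MeasureTheory.norm_integral_le_integral_norm (μ := volume)
        (f := fun u : ℝ => (1+ε*u)^2 * Real.exp (-(3/2:ℝ)*u^2 - (ε*u^3 + ε^2*u^4/4))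
          - (1 + ε*(2*u - u^3) + ε^2*(u^2 - 9/4*u^4 + 1/2*u^6)
      + ε^3*(-(3/2)*u^5 + 5/4*u^7 - 1/6*u^9)
      + ε^4*(-(1/4)*u^6 + 33/32*u^8 - 11/24*u^10 + 1/24*u^12)
      + ε^5*(5/16*u^9 - 43/96*u^11 + 1/8*u^13 - 1/120*u^15)) * Real.exp (-(3/2:ℝ)*u^2))
    simp only [Real.norm_eq_abs] at hni
    exact hni
  have h2 : (∫ u : ℝ, |(1+ε*u)^2 * Real.exp (-(3/2:ℝ)*u^2 - (ε*u^3 + ε^2*u^4/4))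
      - (1 + ε*(2*u - u^3) + ε^2*(u^2 - 9/4*u^4 + 1/2*u^6)
      + ε^3*(-(3/2)*u^5 + 5/4*u^7 - 1/6*u^9)
      + ε^4*(-(1/4)*u^6 + 33/32*u^8 - 11/24*u^10 + 1/24*u^12)
      + ε^5*(5/16*u^9 - 43/96*u^11 + 1/8*u^13 - 1/120*u^15)) * Real.exp (-(3/2:ℝ)*u^2)|)
      ≤ ∫ u : ℝ, ε^6 * Bf u := by
    refine integral_mono ((f_integrable hε hε1).sub (Pg_integrable hε hε1)).abs
      (Bf_integrable.const_mul _) fun u => ?_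
    exact pointwise_bound hε hε1 u
  rw [integral_const_mul] at h2
  calc |∫ u : ℝ, ((1+ε*u)^2 * Real.exp (-(3/2:ℝ)*u^2 - (ε*u^3 + ε^2*u^4/4))
      - (1 + ε*(2*u - u^3) + ε^2*(u^2 - 9/4*u^4 + 1/2*u^6)
      + ε^3*(-(3/2)*u^5 + 5/4*u^7 - 1/6*u^9)
      + ε^4*(-(1/4)*u^6 + 33/32*u^8 - 11/24*u^10 + 1/24*u^12)
      + ε^5*(5/16*u^9 - 43/96*u^11 + 1/8*u^13 - 1/120*u^15)) * Real.exp (-(3/2:ℝ)*u^2))| ≤ ε^6 * ∫ u : ℝ, Bf u := le_trans h1 h2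
    _ = (∫ u : ℝ, Bf u) * ε^6 := mul_comm _ _


lemma rpow_quarter {x : ℝ} (hx : 0 ≤ x) (n : ℕ) : x^((n:ℝ)/4) = (x^((1:ℝ)/4))^n := by
  rw [← Real.rpow_natCast (x^((1:ℝ)/4)) n, ← Real.rpow_mul hx]
  congr 1
  ring

end SP15


open MeasureTheory Filter Asymptotics

/-- Saddle-point asymptotics of `∫ x² exp(−(λV/4)x⁴ + VxE^{3/2}/√λ)dx`:
with `C′(λ) = √(π√λ/(3√V E)) exp(3VE²/(4λ))`, as `λ → 0⁺` the normalized integral equals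
`√2 E/(λ^{5/4}V^{1/4}) − 5/(18√2 λ^{1/4} E V^{5/4})
  + 25λ^{3/4}/(1296√2 E³ V^{9/4}) + O(λ^{7/4})`. -/
theorem saddle_point_ddP
    (Vc E : ℝ) (hV : 0 < Vc) (hE : 0 < E) :
    (fun lam : ℝ =>
        (∫ x : ℝ, x ^ 2 * Real.exp (- (lam * Vc / 4) * x ^ 4
            + Vc * x * (E ^ ((3 : ℝ) / 2) / Real.sqrt lam)))
          / (Real.sqrt (Real.pi * Real.sqrt lam / (3 * Real.sqrt Vc * E))
              * Real.exp (3 * Vc * E ^ 2 / (4 * lam)))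
        - (Real.sqrt 2 * E / (lam ^ ((5 : ℝ) / 4) * Vc ^ ((1 : ℝ) / 4))
            - 5 / (18 * Real.sqrt 2 * lam ^ ((1 : ℝ) / 4) * E * Vc ^ ((5 : ℝ) / 4))
            + 25 * lam ^ ((3 : ℝ) / 4)
                / (1296 * Real.sqrt 2 * E ^ 3 * Vc ^ ((9 : ℝ) / 4))))
      =O[nhdsWithin 0 (Set.Ioi 0)] fun lam : ℝ => lam ^ ((7 : ℝ) / 4) := by
  rw [Asymptotics.isBigO_iff]
  set sV := Real.sqrt Vc with hsVdef
  set sE := Real.sqrt E with hsEdef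
  set qV := Vc ^ ((1:ℝ)/4) with hqVdef
  set p3 := Real.sqrt (Real.pi/3) with hp3def
  have hsV : 0 < sV := Real.sqrt_pos.mpr hV
  have hsE : 0 < sE := Real.sqrt_pos.mpr hE
  have hqV : 0 < qV := Real.rpow_pos_of_pos hV _
  have hp3 : 0 < p3 := Real.sqrt_pos.mpr (by positivity)
  have hsV2 : sV^2 = Vc := Real.sq_sqrt hV.le
  have hsE2 : sE^2 = E := Real.sq_sqrt hE.le
  have hqV2 : qV^2 = sV := by
    rw [hqVdef, hsVdef, ← Real.rpow_natCast (Vc^((1:ℝ)/4)) 2, ← Real.rpow_mul hV.le,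
      Real.sqrt_eq_rpow]
    norm_num
  have hp32 : p3^2 = Real.pi/3 := Real.sq_sqrt (by positivity)
  have hS : SP15.S = Real.sqrt 2 * p3 := by
    rw [SP15.S, show Real.pi/(3/2) = 2*(Real.pi/3) by ring,
      Real.sqrt_mul (by norm_num : (0:ℝ) ≤ 2)]
  use (∫ u : ℝ, SP15.Bf u)/(p3*qV^13*sE^10)
  have hδ : (0:ℝ) < min 1 (Vc*E^2) := by positivity
  filter_upwards [Ioo_mem_nhdsGT hδ] with lam hlam
  obtain ⟨hl, hlt⟩ := hlam
  set sl := Real.sqrt lam with hsldef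
  set ql := lam ^ ((1:ℝ)/4) with hqldef
  have hsl : 0 < sl := Real.sqrt_pos.mpr hl
  have hql : 0 < ql := Real.rpow_pos_of_pos hl _
  have hsl2 : sl^2 = lam := Real.sq_sqrt hl.le
  have hql2 : ql^2 = sl := by
    rw [hqldef, hsldef, ← Real.rpow_natCast (lam^((1:ℝ)/4)) 2, ← Real.rpow_mul hl.le,
      Real.sqrt_eq_rpow]
    norm_num
  have hlamVE : lam ≤ Vc*E^2 := (lt_of_lt_of_le hlt (min_le_right _ _)).le
  -- epsilon
  set ε := sl/(sV*sE^2) with hεdef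
  have hεpos : 0 < ε := by positivity
  have hε1 : ε ≤ 1 := by
    rw [hεdef, div_le_one (by positivity)]
    rw [hsE2]
    calc sl = Real.sqrt lam := hsldef
      _ ≤ Real.sqrt (Vc*E^2) := Real.sqrt_le_sqrt hlamVE
      _ = sV*E := by
          rw [Real.sqrt_mul hV.le, Real.sqrt_sq hE.le, hsVdef]
  -- change of variables
  set cc := sE/sl with hccdef
  have hcc : 0 < cc := by positivity
  have hcce : 0 < cc*ε := by positivity
  have hE32 : E ^ ((3:ℝ)/2) = sE^3 := by
    rw [hsEdef, Real.sqrt_eq_rpow, ← Real.rpow_natCast (E^((1:ℝ)/2)) 3,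
      ← Real.rpow_mul hE.le]
    norm_num
  have h1 := MeasureTheory.Measure.integral_comp_mul_left
    (fun y : ℝ => (y + cc) ^ 2 * Real.exp (- (lam * Vc / 4) * (y + cc) ^ 4
      + Vc * (y + cc) * (E ^ ((3 : ℝ) / 2) / sl))) (cc*ε)
  have h2 := integral_add_right_eq_self (μ := volume)
    (fun x : ℝ => x ^ 2 * Real.exp (- (lam * Vc / 4) * x ^ 4
      + Vc * x * (E ^ ((3 : ℝ) / 2) / sl))) cc
  rw [h2] at h1
  -- h1 : ∫ u, ((cc*ε)*u + cc)^2 * exp(...) = |(cc*ε)⁻¹| • ∫ x, x^2 * exp (...)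
  have hpt : ∀ u : ℝ, ((cc*ε)*u + cc) ^ 2 * Real.exp (- (lam * Vc / 4) * ((cc*ε)*u + cc) ^ 4
      + Vc * ((cc*ε)*u + cc) * (E ^ ((3 : ℝ) / 2) / sl))
      = (cc^2 * Real.exp (3 * Vc * E ^ 2 / (4 * lam)))
        * ((1+ε*u)^2 * Real.exp (-(3/2:ℝ)*u^2 - (ε*u^3 + ε^2*u^4/4))) := by
    intro u
    have harg : - (lam * Vc / 4) * ((cc*ε)*u + cc) ^ 4
        + Vc * ((cc*ε)*u + cc) * (E ^ ((3 : ℝ) / 2) / sl)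
        = 3 * Vc * E ^ 2 / (4 * lam) + (-(3/2:ℝ)*u^2 - (ε*u^3 + ε^2*u^4/4)) := by
      rw [hE32, hccdef, hεdef, show lam = sl^2 from hsl2.symm,
        show Vc = sV^2 from hsV2.symm, show E = sE^2 from hsE2.symm]
      field_simp
      ring
    rw [harg, Real.exp_add]
    ring
  have hIval : (∫ x : ℝ, x ^ 2 * Real.exp (- (lam * Vc / 4) * x ^ 4
      + Vc * x * (E ^ ((3 : ℝ) / 2) / sl)))
      = (cc*ε) * ((cc^2 * Real.exp (3 * Vc * E ^ 2 / (4 * lam)))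
        * ∫ u : ℝ, (1+ε*u)^2 * Real.exp (-(3/2:ℝ)*u^2 - (ε*u^3 + ε^2*u^4/4))) := by
    rw [← integral_const_mul]
    rw [← integral_congr_ae (Eventually.of_forall hpt)]
    rw [h1, smul_eq_mul, abs_inv, abs_of_pos hcce]
    field_simp
    congr 1; ext x; ring
  -- value of K
  have hKval : Real.sqrt (Real.pi * sl / (3 * sV * E)) = p3*ql/(qV*sE) := by
    have hh : Real.pi * sl / (3 * sV * E) = (p3*ql/(qV*sE))^2 := by
      rw [show (p3*ql/(qV*sE))^2 = p3^2*ql^2/(qV^2*sE^2) by ring, hp32, hql2, hqV2, hsE2]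
      ring
    rw [hh, Real.sqrt_sq (by positivity)]
  -- rpow expansions
  have hl54 : lam ^ ((5:ℝ)/4) = ql^5 := by
    rw [show ((5:ℝ)/4) = ((5:ℕ):ℝ)/4 by norm_num, SP15.rpow_quarter hl.le 5, hqldef]
  have hl34 : lam ^ ((3:ℝ)/4) = ql^3 := by
    rw [show ((3:ℝ)/4) = ((3:ℕ):ℝ)/4 by norm_num, SP15.rpow_quarter hl.le 3, hqldef]
  have hl74 : lam ^ ((7:ℝ)/4) = ql^7 := by
    rw [show ((7:ℝ)/4) = ((7:ℕ):ℝ)/4 by norm_num, SP15.rpow_quarter hl.le 7, hqldef]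
  have hV54 : Vc ^ ((5:ℝ)/4) = qV^5 := by
    rw [show ((5:ℝ)/4) = ((5:ℕ):ℝ)/4 by norm_num, SP15.rpow_quarter hV.le 5, hqVdef]
  have hV94 : Vc ^ ((9:ℝ)/4) = qV^9 := by
    rw [show ((9:ℝ)/4) = ((9:ℕ):ℝ)/4 by norm_num, SP15.rpow_quarter hV.le 9, hqVdef]
  set J := ∫ u : ℝ, (1+ε*u)^2 * Real.exp (-(3/2:ℝ)*u^2 - (ε*u^3 + ε^2*u^4/4)) with hJdef
  have hεq : ε = ql^2/(qV^2*sE^2) := by rw [hεdef, ← hql2, ← hqV2]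
  have hexpY : (0:ℝ) < Real.exp (3 * Vc * E ^ 2 / (4 * lam)) := Real.exp_pos _
  have hgoalEq : (∫ x : ℝ, x ^ 2 * Real.exp (- (lam * Vc / 4) * x ^ 4
        + Vc * x * (E ^ ((3 : ℝ) / 2) / sl)))
          / (Real.sqrt (Real.pi * sl / (3 * sV * E))
              * Real.exp (3 * Vc * E ^ 2 / (4 * lam)))
        - (Real.sqrt 2 * E / (lam ^ ((5 : ℝ) / 4) * qV)
            - 5 / (18 * Real.sqrt 2 * ql * E * Vc ^ ((5 : ℝ) / 4))
            + 25 * lam ^ ((3 : ℝ) / 4)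
                / (1296 * Real.sqrt 2 * E ^ 3 * Vc ^ ((9 : ℝ) / 4)))
      = (sE^2/(ql^5*qV*p3)) * (J - SP15.S * (1 - 5/36*ε^2 + 25/2592*ε^4)) := by
    rw [hIval, hKval, hl54, hl34, hV54, hV94, hS, hεq, hccdef, ← hql2,
      show E = sE^2 from hsE2.symm]
    have hs22 : Real.sqrt 2 ^ 2 = 2 := Real.sq_sqrt (by norm_num)
    have hs23 : Real.sqrt 2 ^ 3 = 2 * Real.sqrt 2 := by rw [pow_succ, hs22]
    field_simp
    ring_nf
    rw [hs22]
    ring_nf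
    try rw [hs22]
    try ring
  rw [hgoalEq]
  have hcore := SP15.core hεpos hε1
  rw [← hJdef] at hcore
  have hprefpos : (0:ℝ) < sE^2/(ql^5*qV*p3) := by positivity
  rw [Real.norm_eq_abs, Real.norm_eq_abs, abs_mul, abs_of_pos hprefpos,
    abs_of_nonneg (Real.rpow_nonneg hl.le _), hl74]
  calc (sE^2/(ql^5*qV*p3)) * |J - SP15.S * (1 - 5/36*ε^2 + 25/2592*ε^4)|
      ≤ (sE^2/(ql^5*qV*p3)) * ((∫ u : ℝ, SP15.Bf u) * ε^6) :=
        mul_le_mul_of_nonneg_left hcore hprefpos.le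
    _ = (∫ u : ℝ, SP15.Bf u)/(p3*qV^13*sE^10) * ql^7 := by
        rw [hεq]
        field_simp
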